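/- For every odd integer n ≥ 3, the twisted cube TQ_n contains two vertex-disjoint paths P and Q of equal length whose vertex sets partition V(TQ_n), with start(P) = 00(0)^{n-3}1, end(P) = 01(0)^{n-3}1, start(Q) = 00(0)^{n-3}0, and end(Q) = 11(0)^{n-3}0. -/

import Mathlib

/-- Parity function `P i b = b_i ⊕ b_{i-1} ⊕ ... ⊕ b_0`. -/
def parityFn {n : ℕ} (b : Fin n → Bool) (i : ℕ) : Bool :=
  decide ((((List.range (i+1)).filter fun j => if h : j < n then b ⟨j, h⟩ else false).length) % 2 = 1)

/-- The low-order `2k+1` bits of a binary string of length `2(k+1)+1`. -/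
def lowBits {k : ℕ} (b : Fin (2*(k+1)+1) → Bool) : Fin (2*k+1) → Bool :=
  fun i => b (Fin.castLE (by omega) i)

/-- The cross-edge relation in the twisted cube `TQ_{2(k+1)+1}`:
`b'` is a cross-edge neighbor of `b`. -/
def crossRel (k : ℕ) (b b' : Fin (2*(k+1)+1) → Bool) : Prop :=
  lowBits b' = lowBits b ∧
  ((b' ⟨2*k+2, by omega⟩ = !b ⟨2*k+2, by omega⟩ ∧ b' ⟨2*k+1, by omega⟩ = b ⟨2*k+1, by omega⟩) ∨
   (parityFn b (2*k) = false ∧ b' ⟨2*k+2, by omega⟩ = !b ⟨2*k+2, by omega⟩ ∧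
      b' ⟨2*k+1, by omega⟩ = !b ⟨2*k+1, by omega⟩) ∨
   (parityFn b (2*k) = true ∧ b' ⟨2*k+2, by omega⟩ = b ⟨2*k+2, by omega⟩ ∧
      b' ⟨2*k+1, by omega⟩ = !b ⟨2*k+1, by omega⟩))

/-- The twisted cube `TQ_n` for odd `n = 2k+1`, on vertex set the binary
strings of length `n` (bit `i` of `b` is `b i`). -/
def TwistedCube : (k : ℕ) → SimpleGraph (Fin (2*k+1) → Bool)
  | 0 => ⊤
  | (k+1) =>
    { Adj := fun b b' => b ≠ b' ∧
        ((b ⟨2*k+2, by omega⟩ = b' ⟨2*k+2, by omega⟩ ∧ b ⟨2*k+1, by omega⟩ = b' ⟨2*k+1, by omega⟩ ∧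
          (TwistedCube k).Adj (lowBits b) (lowBits b')) ∨
         crossRel k b b' ∨ crossRel k b' b)
      symm := ⟨by
        rintro b b' ⟨hne, h⟩
        refine ⟨hne.symm, ?_⟩
        rcases h with ⟨h1, h2, h3⟩ | h | h
        · exact Or.inl ⟨h1.symm, h2.symm, (TwistedCube k).symm.symm _ _ h3⟩
        · exact Or.inr (Or.inr h)
        · exact Or.inr (Or.inl h)⟩
      loopless := ⟨fun b h => h.1 rfl⟩ }

lemma adj_zero (x y : Fin 1 → Bool) : (TwistedCube 0).Adj x y ↔ x ≠ y := Iff.rfl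

lemma adj_succ (k : ℕ) (b b' : Fin (2*(k+1)+1) → Bool) :
    (TwistedCube (k+1)).Adj b b' ↔ (b ≠ b' ∧
        ((b ⟨2*k+2, by omega⟩ = b' ⟨2*k+2, by omega⟩ ∧ b ⟨2*k+1, by omega⟩ = b' ⟨2*k+1, by omega⟩ ∧
          (TwistedCube k).Adj (lowBits b) (lowBits b')) ∨
         crossRel k b b' ∨ crossRel k b' b)) := Iff.rfl

def lift (k : ℕ) (i j : Bool) (x : Fin (2*k+1) → Bool) : Fin (2*(k+1)+1) → Bool :=
  fun t => if h : (t : ℕ) < 2*k+1 then x ⟨t, h⟩ else if (t:ℕ) = 2*k+1 then j else i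

lemma lowBits_lift (k : ℕ) (i j : Bool) (x : Fin (2*k+1) → Bool) :
    lowBits (lift k i j x) = x := by
  funext t
  simp only [lowBits, lift, Fin.coe_castLE]
  rw [dif_pos t.isLt]

lemma lift_top (k : ℕ) (i j : Bool) (x : Fin (2*k+1) → Bool) :
    lift k i j x ⟨2*k+2, by omega⟩ = i := by
  simp only [lift]
  rw [dif_neg (by omega), if_neg (by omega)]

lemma lift_snd (k : ℕ) (i j : Bool) (x : Fin (2*k+1) → Bool) :
    lift k i j x ⟨2*k+1, by omega⟩ = j := by
  simp only [lift]
  rw [dif_neg (by omega)]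
  simp

lemma lift_eta (k : ℕ) (v : Fin (2*(k+1)+1) → Bool) :
    lift k (v ⟨2*k+2, by omega⟩) (v ⟨2*k+1, by omega⟩) (lowBits v) = v := by
  funext t
  simp only [lift, lowBits]
  by_cases h : (t : ℕ) < 2*k+1
  · rw [dif_pos h]; exact congrArg v (by ext; simp)
  · rw [dif_neg h]
    by_cases h2 : (t:ℕ) = 2*k+1
    · rw [if_pos h2]; exact congrArg v (Fin.ext (by simp; omega))
    · rw [if_neg h2]; exact congrArg v (Fin.ext (by simp; omega))

lemma lift_inj (k : ℕ) {i j i' j' : Bool} {x x' : Fin (2*k+1) → Bool}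
    (h : lift k i j x = lift k i' j' x') : i = i' ∧ j = j' ∧ x = x' := by
  refine ⟨?_, ?_, ?_⟩
  · rw [← lift_top k i j x, h, lift_top]
  · rw [← lift_snd k i j x, h, lift_snd]
  · rw [← lowBits_lift k i j x, h, lowBits_lift]

lemma length_filter_range (n : ℕ) (f : ℕ → Bool) :
    ((List.range n).filter f).length = ((Finset.range n).filter (fun j => f j = true)).card := by
  induction n with
  | zero => simp
  | succ m ih =>
      rw [List.range_succ, List.filter_append, Finset.range_add_one, Finset.filter_insert]
      by_cases h : f m <;> simp [h, ih, Finset.card_insert_of_notMem, Finset.mem_filter]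

lemma parity_lift (k : ℕ) (i j : Bool) (x : Fin (2*k+1) → Bool) :
    parityFn (lift k i j x) (2*k) = parityFn x (2*k) := by
  unfold parityFn
  congr 1
  have : ∀ j' ∈ List.range (2*k+1),
      (if h : j' < 2*(k+1)+1 then lift k i j x ⟨j', h⟩ else false)
        = (if h : j' < 2*k+1 then x ⟨j', h⟩ else false) := by
    intro j' hj'
    rw [List.mem_range] at hj'
    rw [dif_pos (by omega), dif_pos hj']
    simp only [lift]
    rw [dif_pos hj']
  rw [List.filter_congr this]

lemma parity_of (k : ℕ) (b : Fin (2*k+1) → Bool) :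
    parityFn b (2*k) =
      decide ((((Finset.range (2*k+1)).filter (fun j => ∃ h : j < 2*k+1, b ⟨j, h⟩ = true)).card) % 2 = 1) := by
  unfold parityFn
  rw [length_filter_range]
  congr 2
  apply congrArg (fun s : Finset ℕ => s.card % 2)
  apply Finset.filter_congr
  intro j hj
  rw [Finset.mem_range] at hj
  rw [dif_pos hj]
  simp [hj]

lemma parity_startQ (k : ℕ) : parityFn (fun _ : Fin (2*k+1) => false) (2*k) = false := by
  rw [parity_of]
  simp

lemma parity_startP (k : ℕ) :
    parityFn (fun i : Fin (2*k+1) => decide ((i:ℕ) = 0)) (2*k) = true := by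
  rw [parity_of]
  have : (Finset.range (2*k+1)).filter
      (fun j => ∃ h : j < 2*k+1, (fun i : Fin (2*k+1) => decide ((i:ℕ) = 0)) ⟨j, h⟩ = true) = {0} := by
    ext j; simp [Finset.mem_filter, Finset.mem_range]; omega
  rw [this]
  simp

lemma parity_endP (k : ℕ) (hk : 1 ≤ k) :
    parityFn (fun i : Fin (2*k+1) => decide ((i:ℕ) = 2*k-1 ∨ (i:ℕ) = 0)) (2*k) = false := by
  rw [parity_of]
  have : (Finset.range (2*k+1)).filter
      (fun j => ∃ h : j < 2*k+1, (fun i : Fin (2*k+1) => decide ((i:ℕ) = 2*k-1 ∨ (i:ℕ) = 0)) ⟨j, h⟩ = true)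
      = {0, 2*k-1} := by
    ext j; simp [Finset.mem_filter, Finset.mem_range]; omega
  rw [this]
  rw [Finset.card_insert_of_notMem (by simp; omega), Finset.card_singleton]
  decide

lemma parity_endQ (k : ℕ) (hk : 1 ≤ k) :
    parityFn (fun i : Fin (2*k+1) => decide ((i:ℕ) = 2*k ∨ (i:ℕ) = 2*k-1)) (2*k) = false := by
  rw [parity_of]
  have : (Finset.range (2*k+1)).filter
      (fun j => ∃ h : j < 2*k+1, (fun i : Fin (2*k+1) => decide ((i:ℕ) = 2*k ∨ (i:ℕ) = 2*k-1)) ⟨j, h⟩ = true)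
      = {2*k-1, 2*k} := by
    ext j; simp [Finset.mem_filter, Finset.mem_range]; omega
  rw [this]
  rw [Finset.card_insert_of_notMem (by simp; omega), Finset.card_singleton]
  decide

def liftHom (k : ℕ) (i j : Bool) : TwistedCube k →g TwistedCube (k+1) where
  toFun := lift k i j
  map_rel' := by
    intro x y h
    rw [adj_succ]
    refine ⟨fun he => h.ne (lift_inj k he).2.2, Or.inl ⟨?_, ?_, ?_⟩⟩
    · rw [lift_top, lift_top]
    · rw [lift_snd, lift_snd]
    · rw [lowBits_lift, lowBits_lift]; exact h

lemma adj_flip_top (k : ℕ) (i j : Bool) (x : Fin (2*k+1) → Bool) :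
    (TwistedCube (k+1)).Adj (lift k i j x) (lift k (!i) j x) := by
  rw [adj_succ]
  refine ⟨fun he => by simpa using (lift_inj k he).1, Or.inr (Or.inl ⟨?_, Or.inl ⟨?_, ?_⟩⟩)⟩
  · rw [lowBits_lift, lowBits_lift]
  · rw [lift_top, lift_top]
  · rw [lift_snd, lift_snd]

lemma adj_flip_both (k : ℕ) (i j : Bool) (x : Fin (2*k+1) → Bool)
    (hp : parityFn x (2*k) = false) :
    (TwistedCube (k+1)).Adj (lift k i j x) (lift k (!i) (!j) x) := by
  rw [adj_succ]
  refine ⟨fun he => by simpa using (lift_inj k he).1,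
    Or.inr (Or.inl ⟨?_, Or.inr (Or.inl ⟨?_, ?_, ?_⟩)⟩)⟩
  · rw [lowBits_lift, lowBits_lift]
  · rw [parity_lift]; exact hp
  · rw [lift_top, lift_top]
  · rw [lift_snd, lift_snd]

lemma adj_flip_snd (k : ℕ) (i j : Bool) (x : Fin (2*k+1) → Bool)
    (hp : parityFn x (2*k) = true) :
    (TwistedCube (k+1)).Adj (lift k i j x) (lift k i (!j) x) := by
  rw [adj_succ]
  refine ⟨fun he => by simpa using (lift_inj k he).2.1,
    Or.inr (Or.inl ⟨?_, Or.inr (Or.inr ⟨?_, ?_, ?_⟩)⟩)⟩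
  · rw [lowBits_lift, lowBits_lift]
  · rw [parity_lift]; exact hp
  · rw [lift_top, lift_top]
  · rw [lift_snd, lift_snd]

instance crossRel.dec (k : ℕ) (b b' : Fin (2*(k+1)+1) → Bool) : Decidable (crossRel k b b') := by
  unfold crossRel; infer_instance

section Base
def b001 : Fin 3 → Bool := ![true, false, false]
def b101 : Fin 3 → Bool := ![true, false, true]
def b111 : Fin 3 → Bool := ![true, true, true]
def b011 : Fin 3 → Bool := ![true, true, false]
def b000 : Fin 3 → Bool := ![false, false, false]
def b100 : Fin 3 → Bool := ![false, false, true]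
def b010 : Fin 3 → Bool := ![false, true, false]
def b110 : Fin 3 → Bool := ![false, true, true]

lemma adj1 (u v : Fin 3 → Bool) (h1 : u ≠ v) (h2 : crossRel 0 u v ∨ crossRel 0 v u) :
    (TwistedCube 1).Adj u v :=
  (adj_succ 0 u v).mpr ⟨h1, Or.inr h2⟩

lemma e11 : (TwistedCube 1).Adj b001 b101 := adj1 _ _ (by decide) (by decide)
lemma e12 : (TwistedCube 1).Adj b101 b111 := adj1 _ _ (by decide) (by decide)
lemma e13 : (TwistedCube 1).Adj b111 b011 := adj1 _ _ (by decide) (by decide)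
lemma e21 : (TwistedCube 1).Adj b000 b100 := adj1 _ _ (by decide) (by decide)
lemma e22 : (TwistedCube 1).Adj b100 b010 := adj1 _ _ (by decide) (by decide)
lemma e23 : (TwistedCube 1).Adj b010 b110 := adj1 _ _ (by decide) (by decide)

def baseP : (TwistedCube 1).Walk b001 b011 :=
  .cons e11 (.cons e12 (.cons e13 .nil))
def baseQ : (TwistedCube 1).Walk b000 b110 :=
  .cons e21 (.cons e22 (.cons e23 .nil))

lemma base_case :
    ∃ (P : (TwistedCube 1).Walk (fun i => decide ((i : ℕ) = 0))
        (fun i => decide ((i : ℕ) = 2*1-1 ∨ (i : ℕ) = 0)))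
      (Q : (TwistedCube 1).Walk (fun _ => false)
        (fun i => decide ((i : ℕ) = 2*1 ∨ (i : ℕ) = 2*1-1))),
      P.IsPath ∧ Q.IsPath ∧
      P.support.length = Q.support.length ∧
      (∀ v, v ∈ P.support → v ∉ Q.support) ∧
      (∀ v : Fin (2*1+1) → Bool, v ∈ P.support ∨ v ∈ Q.support) := by
  refine ⟨baseP.copy (by decide) (by decide), baseQ.copy (by decide) (by decide), ?_, ?_, ?_, ?_, ?_⟩ <;>
    simp only [SimpleGraph.Walk.support_copy, SimpleGraph.Walk.isPath_copy, baseP, baseQ,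
      SimpleGraph.Walk.support_cons, SimpleGraph.Walk.support_nil]
  · rw [SimpleGraph.Walk.isPath_def]
    simp only [baseP, SimpleGraph.Walk.support_cons, SimpleGraph.Walk.support_nil]
    decide
  · rw [SimpleGraph.Walk.isPath_def]
    simp only [baseQ, SimpleGraph.Walk.support_cons, SimpleGraph.Walk.support_nil]
    decide
  · rfl
  · decide
  · decide
end Base

lemma liftHom_coe (k : ℕ) (i j : Bool) : ⇑(liftHom k i j) = lift k i j := rfl

lemma lift_injective (k : ℕ) (i j : Bool) : Function.Injective (lift k i j) :=
  fun _ _ h => (lift_inj k h).2.2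

lemma lift_eq_fun (k : ℕ) (i j : Bool) (p : ℕ → Prop) [DecidablePred p] (q : ℕ → Prop)
    [DecidablePred q] (hlow : ∀ t, t < 2*k+1 → (p t ↔ q t))
    (hj : j = decide (q (2*k+1))) (hi : i = decide (q (2*k+2))) :
    lift k i j (fun t => decide (p (t : ℕ))) = fun t : Fin (2*(k+1)+1) => decide (q (t : ℕ)) := by
  funext t
  simp only [lift]
  by_cases h : (t : ℕ) < 2*k+1
  · rw [dif_pos h]
    exact decide_eq_decide.mpr (hlow _ h)
  · rw [dif_neg h]
    by_cases h2 : (t : ℕ) = 2*k+1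
    · rw [if_pos h2, hj, h2]
    · have h3 : (t : ℕ) = 2*k+2 := by omega
      rw [if_neg h2, hi, h3]

lemma disjoint_map_lift (k : ℕ) {i j i' j' : Bool} (h : (i,j) ≠ (i',j'))
    (l l' : List (Fin (2*k+1) → Bool)) :
    (l.map (lift k i j)).Disjoint (l'.map (lift k i' j')) := by
  intro a ha ha'
  simp only [List.mem_map] at ha ha'
  obtain ⟨x, _, rfl⟩ := ha
  obtain ⟨y, _, hy⟩ := ha'
  obtain ⟨h1, h2, _⟩ := lift_inj k hy
  exact h (by simp [h1, h2])

lemma nodup_four_lift (k : ℕ) (i1 j1 i2 j2 i3 j3 i4 j4 : Bool)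
    (h12 : (i1,j1) ≠ (i2,j2)) (h13 : (i1,j1) ≠ (i3,j3)) (h14 : (i1,j1) ≠ (i4,j4))
    (h23 : (i2,j2) ≠ (i3,j3)) (h24 : (i2,j2) ≠ (i4,j4)) (h34 : (i3,j3) ≠ (i4,j4))
    {m1 m2 m3 m4 : List (Fin (2*k+1) → Bool)}
    (hm1 : m1.Nodup) (hm2 : m2.Nodup) (hm3 : m3.Nodup) (hm4 : m4.Nodup) :
    (m1.map (lift k i1 j1) ++ (m2.map (lift k i2 j2) ++
      (m3.map (lift k i3 j3) ++ m4.map (lift k i4 j4)))).Nodup := by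
  refine (hm1.map (lift_injective k i1 j1)).append
    ((hm2.map (lift_injective k i2 j2)).append
      ((hm3.map (lift_injective k i3 j3)).append (hm4.map (lift_injective k i4 j4))
        (disjoint_map_lift k h34 _ _)) ?_) ?_
  · rw [List.disjoint_append_right]
    exact ⟨disjoint_map_lift k h23 _ _, disjoint_map_lift k h24 _ _⟩
  · rw [List.disjoint_append_right, List.disjoint_append_right]
    exact ⟨disjoint_map_lift k h12 _ _,
      disjoint_map_lift k h13 _ _, disjoint_map_lift k h14 _ _⟩

open SimpleGraph.Walk in
theorem main (k : ℕ) (hk : 1 ≤ k) :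
    ∃ (P : (TwistedCube k).Walk (fun i => decide ((i : ℕ) = 0))
        (fun i => decide ((i : ℕ) = 2*k-1 ∨ (i : ℕ) = 0)))
      (Q : (TwistedCube k).Walk (fun _ => false)
        (fun i => decide ((i : ℕ) = 2*k ∨ (i : ℕ) = 2*k-1))),
      P.IsPath ∧ Q.IsPath ∧
      P.support.length = Q.support.length ∧
      (∀ v, v ∈ P.support → v ∉ Q.support) ∧
      (∀ v : Fin (2*k+1) → Bool, v ∈ P.support ∨ v ∈ Q.support) := by
  induction k, hk using Nat.le_induction with
  | base => exact base_case
  | succ k hk ih =>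
    set aP : Fin (2*k+1) → Bool := fun i => decide ((i : ℕ) = 0) with haP
    set bP : Fin (2*k+1) → Bool := fun i => decide ((i : ℕ) = 2*k-1 ∨ (i : ℕ) = 0) with hbP
    set cQ : Fin (2*k+1) → Bool := fun _ => false with hcQ
    set dQ : Fin (2*k+1) → Bool := fun i => decide ((i : ℕ) = 2*k ∨ (i : ℕ) = 2*k-1) with hdQ
    obtain ⟨P, Q, hP, hQ, hlen, hdisj, hcover⟩ := ih
    have hpa : parityFn aP (2*k) = true := parity_startP k
    have hpb : parityFn bP (2*k) = false := parity_endP k hk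
    have hpc : parityFn cQ (2*k) = false := parity_startQ k
    -- cross edges
    have E1 : (TwistedCube (k+1)).Adj (lift k false false bP) (lift k true true bP) := by
      simpa using adj_flip_both k false false bP hpb
    have E2 : (TwistedCube (k+1)).Adj (lift k true true aP) (lift k true false aP) := by
      simpa using adj_flip_snd k true true aP hpa
    have E3 : (TwistedCube (k+1)).Adj (lift k true false bP) (lift k false true bP) := by
      simpa using adj_flip_both k true false bP hpb
    have F1 : (TwistedCube (k+1)).Adj (lift k false false dQ) (lift k true false dQ) := by
      simpa using adj_flip_top k false false dQ
    have F2 : (TwistedCube (k+1)).Adj (lift k true false cQ) (lift k false true cQ) := by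
      simpa using adj_flip_both k true false cQ hpc
    have F3 : (TwistedCube (k+1)).Adj (lift k false true dQ) (lift k true true dQ) := by
      simpa using adj_flip_top k false true dQ
    -- the big walks
    let P' : (TwistedCube (k+1)).Walk (lift k false false aP) (lift k false true aP) :=
      (P.map (liftHom k false false)).append (.cons E1
        (((P.map (liftHom k true true)).reverse).append (.cons E2
          ((P.map (liftHom k true false)).append (.cons E3
            ((P.map (liftHom k false true)).reverse))))))
    let Q' : (TwistedCube (k+1)).Walk (lift k false false cQ) (lift k true true cQ) :=
      (Q.map (liftHom k false false)).append (.cons F1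
        (((Q.map (liftHom k true false)).reverse).append (.cons F2
          ((Q.map (liftHom k false true)).append (.cons F3
            ((Q.map (liftHom k true true)).reverse))))))
    have hsupP : P'.support = (P.support.map (lift k false false)) ++
        ((P.support.map (lift k true true)).reverse ++
        ((P.support.map (lift k true false)) ++ (P.support.map (lift k false true)).reverse)) := by
      simp only [P']
      erw [support_append, support_cons, support_append, support_cons, support_append, support_cons]
      erw [support_reverse, support_reverse, support_map, support_map, support_map, support_map]
      simp [liftHom_coe]
    have hsupQ : Q'.support = (Q.support.map (lift k false false)) ++
        ((Q.support.map (lift k true false)).reverse ++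
        ((Q.support.map (lift k false true)) ++ (Q.support.map (lift k true true)).reverse)) := by
      simp only [Q']
      erw [support_append, support_cons, support_append, support_cons, support_append, support_cons]
      erw [support_reverse, support_reverse, support_map, support_map, support_map, support_map]
      simp [liftHom_coe]
    have memP : ∀ v : Fin (2*(k+1)+1) → Bool, v ∈ P'.support ↔ lowBits v ∈ P.support := by
      intro v
      rw [hsupP]
      simp only [List.mem_append, List.mem_reverse, List.mem_map]
      constructor
      · rintro (⟨x, hx, rfl⟩ | ⟨x, hx, rfl⟩ | ⟨x, hx, rfl⟩ | ⟨x, hx, rfl⟩) <;>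
          rwa [lowBits_lift]
      · intro hv
        have he := lift_eta k v
        cases hb2 : v ⟨2*k+2, by omega⟩ <;> cases hb1 : v ⟨2*k+1, by omega⟩ <;>
          rw [hb2, hb1] at he
        · exact Or.inl ⟨lowBits v, hv, he⟩
        · exact Or.inr (Or.inr (Or.inr ⟨lowBits v, hv, he⟩))
        · exact Or.inr (Or.inr (Or.inl ⟨lowBits v, hv, he⟩))
        · exact Or.inr (Or.inl ⟨lowBits v, hv, he⟩)
    have memQ : ∀ v : Fin (2*(k+1)+1) → Bool, v ∈ Q'.support ↔ lowBits v ∈ Q.support := by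
      intro v
      rw [hsupQ]
      simp only [List.mem_append, List.mem_reverse, List.mem_map]
      constructor
      · rintro (⟨x, hx, rfl⟩ | ⟨x, hx, rfl⟩ | ⟨x, hx, rfl⟩ | ⟨x, hx, rfl⟩) <;>
          rwa [lowBits_lift]
      · intro hv
        have he := lift_eta k v
        cases hb2 : v ⟨2*k+2, by omega⟩ <;> cases hb1 : v ⟨2*k+1, by omega⟩ <;>
          rw [hb2, hb1] at he
        · exact Or.inl ⟨lowBits v, hv, he⟩
        · exact Or.inr (Or.inr (Or.inl ⟨lowBits v, hv, he⟩))
        · exact Or.inr (Or.inl ⟨lowBits v, hv, he⟩)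
        · exact Or.inr (Or.inr (Or.inr ⟨lowBits v, hv, he⟩))
    have hPpath : P'.IsPath := by
      rw [isPath_def, hsupP, ← List.map_reverse, ← List.map_reverse]
      exact nodup_four_lift k false false true true true false false true
        (by decide) (by decide) (by decide) (by decide) (by decide) (by decide)
        hP.support_nodup (List.nodup_reverse.mpr hP.support_nodup)
        hP.support_nodup (List.nodup_reverse.mpr hP.support_nodup)
    have hQpath : Q'.IsPath := by
      rw [isPath_def, hsupQ, ← List.map_reverse, ← List.map_reverse]
      exact nodup_four_lift k false false true false false true true true
        (by decide) (by decide) (by decide) (by decide) (by decide) (by decide)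
        hQ.support_nodup (List.nodup_reverse.mpr hQ.support_nodup)
        hQ.support_nodup (List.nodup_reverse.mpr hQ.support_nodup)
    have hlen' : P'.support.length = Q'.support.length := by
      rw [hsupP, hsupQ]
      simp only [List.length_append, List.length_map, List.length_reverse]
      omega
    have hsPeq : lift k false false aP = (fun i : Fin (2*(k+1)+1) => decide ((i:ℕ) = 0)) :=
      lift_eq_fun k false false (fun t => t = 0) (fun t => t = 0) (fun t ht => Iff.rfl)
        (by rw [eq_comm, decide_eq_false_iff_not]; omega)
        (by rw [eq_comm, decide_eq_false_iff_not]; omega)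
    have hePeq : lift k false true aP =
        (fun i : Fin (2*(k+1)+1) => decide ((i:ℕ) = 2*(k+1)-1 ∨ (i:ℕ) = 0)) :=
      lift_eq_fun k false true (fun t => t = 0) (fun t => t = 2*(k+1)-1 ∨ t = 0)
        (fun t ht => by omega)
        (by rw [eq_comm, decide_eq_true_iff]; omega)
        (by rw [eq_comm, decide_eq_false_iff_not]; omega)
    have hsQeq : lift k false false cQ = (fun _ : Fin (2*(k+1)+1) => false) :=
      lift_eq_fun k false false (fun _ => False) (fun _ => False) (fun t ht => Iff.rfl)
        (by rw [eq_comm, decide_eq_false_iff_not]; exact not_false)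
        (by rw [eq_comm, decide_eq_false_iff_not]; exact not_false)
    have heQeq : lift k true true cQ =
        (fun i : Fin (2*(k+1)+1) => decide ((i:ℕ) = 2*(k+1) ∨ (i:ℕ) = 2*(k+1)-1)) :=
      lift_eq_fun k true true (fun _ => False) (fun t => t = 2*(k+1) ∨ t = 2*(k+1)-1)
        (fun t ht => ⟨fun h => h.elim, fun h => by omega⟩)
        (by rw [eq_comm, decide_eq_true_iff]; omega)
        (by rw [eq_comm, decide_eq_true_iff]; omega)
    refine ⟨P'.copy hsPeq hePeq, Q'.copy hsQeq heQeq, ?_, ?_, ?_, ?_, ?_⟩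
    · rw [isPath_copy]; exact hPpath
    · rw [isPath_copy]; exact hQpath
    · rw [support_copy, support_copy]; exact hlen'
    · intro v hv
      rw [support_copy, memP] at hv
      rw [support_copy, memQ]
      exact hdisj _ hv
    · intro v
      rw [support_copy, support_copy, memP, memQ]
      exact hcover (lowBits v)

/-- For every odd `n = 2k+1 ≥ 3`, `TQ_n` contains two vertex-disjoint
paths `P` and `Q` of equal length whose vertex sets partition `V(TQ_n)`, with
`start(P) = 00(0)^{n-3}1`, `end(P) = 01(0)^{n-3}1`, `start(Q) = 00(0)^{n-3}0`,
`end(Q) = 11(0)^{n-3}0`. -/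
theorem twistedCube_two_equal_node_disjoint_paths (k : ℕ) (hk : 1 ≤ k) :
    ∃ (P : (TwistedCube k).Walk (fun i => decide ((i : ℕ) = 0))
        (fun i => decide ((i : ℕ) = 2*k-1 ∨ (i : ℕ) = 0)))
      (Q : (TwistedCube k).Walk (fun _ => false)
        (fun i => decide ((i : ℕ) = 2*k ∨ (i : ℕ) = 2*k-1))),
      P.IsPath ∧ Q.IsPath ∧
      P.support.length = Q.support.length ∧
      (∀ v, v ∈ P.support → v ∉ Q.support) ∧
      (∀ v : Fin (2*k+1) → Bool, v ∈ P.support ∨ v ∈ Q.support) := by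
  exact main k hk
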